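/- With the four maps g₁, g₂, g₃, g₄ : M → M defined by g₁|_{M₁}(x) = M₁(φ(t_x)/2), g₂|_{M₁}(x) = M₁(1/2 − φ(t_x)/2), g₃|_{M₁}(x) = M₁(1/2 + φ(t_x)/2), g₄|_{M₁}(x) = M₁(1 − φ(t_x)/2), and constant values M₁(0), M₁(1/2), M₁(1/2), M₁(1) respectively on M \ M₁, one has ⋃_{i=1}^4 g_i(M) = M₁. -/

import Mathlib

/-- The distance-to-nearest-integer sawtooth function. -/
noncomputable def sawtooth (t : ℝ) : ℝ := |t - round t|

/-- The rescaled sawtooth `φ_n(t) = 2^{-n} φ(2^n t)`. -/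
noncomputable def sawtoothN (n : ℕ) (t : ℝ) : ℝ := (1 / 2 ^ n) * sawtooth (2 ^ n * t)

/-- The bone `I = [0,1] × {0}` of the shark teeth. -/
def bone : Set (ℝ × ℝ) := Set.Icc (0 : ℝ) 1 ×ˢ ({0} : Set ℝ)

/-- Parametrization of the `k`-th row of teeth: `t ↦ (t, (1/k) φ_{n_k}(t))`. -/
noncomputable def rowFun (nk : ℕ → ℕ) (k : ℕ) (t : ℝ) : ℝ × ℝ :=
  (t, (1 / (k : ℝ)) * sawtoothN (nk k) t)

/-- The `k`-th row of teeth `M_k`. -/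
noncomputable def rowSet (nk : ℕ → ℕ) (k : ℕ) : Set (ℝ × ℝ) :=
  rowFun nk k '' Set.Icc (0 : ℝ) 1

/-- The shark teeth space `M = I ∪ ⋃_{k ≥ 1} M_k`. -/
noncomputable def shark (nk : ℕ → ℕ) : Set (ℝ × ℝ) :=
  bone ∪ ⋃ k, ⋃ (_ : 1 ≤ k), rowSet nk k


lemma sawtooth_nonneg (t : ℝ) : 0 ≤ sawtooth t := abs_nonneg _

lemma sawtooth_le_half (t : ℝ) : sawtooth t ≤ 1/2 := by
  simpa [sawtooth] using abs_sub_round t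

lemma sawtooth_eq_self {s : ℝ} (h0 : 0 ≤ s) (h1 : s ≤ 1/2) : sawtooth s = s := by
  unfold sawtooth
  rcases eq_or_lt_of_le h1 with h | h
  · subst h
    have : round (1/2 : ℝ) = 1 := by
      rw [round_eq]; norm_num
    rw [this]; norm_num
  · have : round s = 0 := by
      rw [round_eq]
      apply Int.floor_eq_zero_iff.mpr
      constructor <;> simp <;> linarith
    rw [this]
    simpa using abs_of_nonneg h0

lemma row_mem_shark (nk : ℕ → ℕ) : rowSet nk 1 ⊆ shark nk := fun x hx =>
  Or.inr (Set.mem_iUnion₂.mpr ⟨1, le_rfl, hx⟩)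

theorem g_maps_cover_first_row (nk : ℕ → ℕ) (hmono : Monotone nk)
    (g₁ g₂ g₃ g₄ : ℝ × ℝ → ℝ × ℝ)
    (h1c : ∀ x ∈ shark nk \ rowSet nk 1, g₁ x = rowFun nk 1 0)
    (h1 : ∀ x ∈ rowSet nk 1, g₁ x = rowFun nk 1 (sawtooth x.1 / 2))
    (h2c : ∀ x ∈ shark nk \ rowSet nk 1, g₂ x = rowFun nk 1 (1/2))
    (h2 : ∀ x ∈ rowSet nk 1, g₂ x = rowFun nk 1 (1/2 - sawtooth x.1 / 2))
    (h3c : ∀ x ∈ shark nk \ rowSet nk 1, g₃ x = rowFun nk 1 (1/2))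
    (h3 : ∀ x ∈ rowSet nk 1, g₃ x = rowFun nk 1 (1/2 + sawtooth x.1 / 2))
    (h4c : ∀ x ∈ shark nk \ rowSet nk 1, g₄ x = rowFun nk 1 1)
    (h4 : ∀ x ∈ rowSet nk 1, g₄ x = rowFun nk 1 (1 - sawtooth x.1 / 2)) :
    g₁ '' shark nk ∪ g₂ '' shark nk ∪ g₃ '' shark nk ∪ g₄ '' shark nk =
      rowSet nk 1 := by

  ext y
  constructor
  · intro hy
    have cov : ∀ s : ℝ, 0 ≤ s → s ≤ 1 → rowFun nk 1 s ∈ rowSet nk 1 := fun s hs hs' =>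
      Set.mem_image_of_mem _ ⟨hs, hs'⟩
    have key : ∀ (g : ℝ × ℝ → ℝ × ℝ) (a b : ℝ), 0 ≤ a → a ≤ 1 → 0 ≤ b → b ≤ 1 →
        (∀ x ∈ shark nk \ rowSet nk 1, g x = rowFun nk 1 a) →
        (∀ x ∈ rowSet nk 1, ∃ c, 0 ≤ c ∧ c ≤ 1 ∧ g x = rowFun nk 1 c) →
        y ∈ g '' shark nk → y ∈ rowSet nk 1 := by
      intro g a b ha ha' hb hb' hc hr hy
      obtain ⟨x, hx, rfl⟩ := hy
      by_cases hx1 : x ∈ rowSet nk 1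
      · obtain ⟨c, hc0, hc1, hgc⟩ := hr x hx1
        rw [hgc]; exact cov c hc0 hc1
      · rw [hc x ⟨hx, hx1⟩]; exact cov a ha ha'
    have s2 : ∀ x : ℝ × ℝ, 0 ≤ sawtooth x.1 / 2 ∧ sawtooth x.1 / 2 ≤ 1 := by
      intro x
      have := sawtooth_nonneg x.1
      have := sawtooth_le_half x.1
      constructor <;> linarith
    rcases hy with ((hy | hy) | hy) | hy
    · exact key g₁ 0 0 le_rfl zero_le_one le_rfl zero_le_one h1c
        (fun x hx => ⟨sawtooth x.1 / 2, (s2 x).1, (s2 x).2, h1 x hx⟩) hy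
    · exact key g₂ (1/2) 0 (by norm_num) (by norm_num) le_rfl zero_le_one h2c
        (fun x hx => by
          have := sawtooth_nonneg x.1; have := sawtooth_le_half x.1
          exact ⟨1/2 - sawtooth x.1 / 2, by linarith, by linarith, h2 x hx⟩) hy
    · exact key g₃ (1/2) 0 (by norm_num) (by norm_num) le_rfl zero_le_one h3c
        (fun x hx => by
          have := sawtooth_nonneg x.1; have := sawtooth_le_half x.1
          exact ⟨1/2 + sawtooth x.1 / 2, by linarith, by linarith, h3 x hx⟩) hy
    · exact key g₄ 1 0 zero_le_one le_rfl le_rfl zero_le_one h4c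
        (fun x hx => by
          have := sawtooth_nonneg x.1; have := sawtooth_le_half x.1
          exact ⟨1 - sawtooth x.1 / 2, by linarith, by linarith, h4 x hx⟩) hy
  · intro hy
    obtain ⟨t, ⟨ht0, ht1⟩, rfl⟩ := hy
    have mem : ∀ s : ℝ, 0 ≤ s → s ≤ 1 → rowFun nk 1 s ∈ rowSet nk 1 := fun s hs hs' =>
      Set.mem_image_of_mem _ ⟨hs, hs'⟩
    rcases le_or_gt t (1/4) with h | h
    · left; left; left
      refine ⟨rowFun nk 1 (2*t), row_mem_shark nk (mem _ (by linarith) (by linarith)), ?_⟩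
      rw [h1 _ (mem _ (by linarith) (by linarith))]
      show rowFun nk 1 (sawtooth (2*t) / 2) = rowFun nk 1 t
      rw [sawtooth_eq_self (by linarith) (by linarith)]
      exact congrArg (rowFun nk 1) (by ring)
    rcases le_or_gt t (1/2) with h' | h'
    · left; left; right
      refine ⟨rowFun nk 1 (1-2*t), row_mem_shark nk (mem _ (by linarith) (by linarith)), ?_⟩
      rw [h2 _ (mem _ (by linarith) (by linarith))]
      show rowFun nk 1 (1/2 - sawtooth (1-2*t) / 2) = rowFun nk 1 t
      rw [sawtooth_eq_self (by linarith) (by linarith)]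
      exact congrArg (rowFun nk 1) (by ring)
    rcases le_or_gt t (3/4) with h'' | h''
    · left; right
      refine ⟨rowFun nk 1 (2*t-1), row_mem_shark nk (mem _ (by linarith) (by linarith)), ?_⟩
      rw [h3 _ (mem _ (by linarith) (by linarith))]
      show rowFun nk 1 (1/2 + sawtooth (2*t-1) / 2) = rowFun nk 1 t
      rw [sawtooth_eq_self (by linarith) (by linarith)]
      exact congrArg (rowFun nk 1) (by ring)
    · right
      refine ⟨rowFun nk 1 (2-2*t), row_mem_shark nk (mem _ (by linarith) (by linarith)), ?_⟩
      rw [h4 _ (mem _ (by linarith) (by linarith))]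
      show rowFun nk 1 (1 - sawtooth (2-2*t) / 2) = rowFun nk 1 t
      rw [sawtooth_eq_self (by linarith) (by linarith)]
      exact congrArg (rowFun nk 1) (by ring)
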